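/- The extreme points of the unit ball of the dual norm of the Ky Fan k-norm on ℝⁿ (i.e., the norm ‖x‖_{(k)*} = max(‖x‖_∞, ‖x‖₁/k)) are exactly the vectors of the form ∑_{i∈S} ±eᵢ, where S ⊆ {1,…,n} with |S| = k and eᵢ are the standard basis vectors. -/

import Mathlib

open Finset

/-- The symmetric matrix `Θ_x`: off-diagonal entries `(xᵢ+xⱼ)/(2n)`, diagonal chosen
so that every row sums to zero. -/
noncomputable def Theta (n : ℕ) (x : Fin n → ℝ) : Matrix (Fin n) (Fin n) ℝ :=
  fun i j =>
    if i = j then -(∑ k ∈ Finset.univ.erase i, (x i + x k) / (2 * n))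
    else (x i + x j) / (2 * n)

/-- `I_x = Iₙ + Θ_x`. -/
noncomputable def Imat (n : ℕ) (x : Fin n → ℝ) : Matrix (Fin n) (Fin n) ℝ :=
  1 + Theta n x

/-- `E f`: the constant vector whose entries all equal the mean of `f`. -/
noncomputable def meanVec (n : ℕ) (f : Fin n → ℝ) : Fin n → ℝ :=
  fun _ => (∑ i, f i) / n

/-- The sup norm `‖x‖_∞`. -/
noncomputable def linf (n : ℕ) (x : Fin n → ℝ) : ℝ :=
  sSup (Set.range fun i => |x i|)

/-- The Ky Fan `k`-norm: the sum of the `k` largest absolute values of the entries,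
i.e. the maximum of `∑_{i ∈ S} |xᵢ|` over subsets `S` of cardinality `k`. -/
noncomputable def kyFan (n k : ℕ) (x : Fin n → ℝ) : ℝ :=
  sSup ((fun S : Finset (Fin n) => ∑ i ∈ S, |x i|) '' {S | S.card = k})

/-- The dual Ky Fan `k`-norm: `max(‖x‖_∞, ‖x‖₁ / k)`. -/
noncomputable def kyFanDual (n k : ℕ) (x : Fin n → ℝ) : ℝ :=
  max (linf n x) ((∑ i, |x i|) / k)

/-- A symmetric norm on `ℝⁿ`: a norm invariant under coordinate permutations
and sign changes. -/
structure IsSymmNorm (n : ℕ) (N : (Fin n → ℝ) → ℝ) : Prop where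
  add_le : ∀ x y, N (x + y) ≤ N x + N y
  smul : ∀ (c : ℝ) (x), N (c • x) = |c| * N x
  pos : ∀ x, x ≠ 0 → 0 < N x
  perm : ∀ (σ : Equiv.Perm (Fin n)) (x), N (x ∘ σ) = N x
  sign : ∀ (ε x : Fin n → ℝ), (∀ i, ε i = 1 ∨ ε i = -1) → N (ε * x) = N x


open Finset

lemma memBall (n k : ℕ) (hn : 0 < n) (hk : 0 < k) (x : Fin n → ℝ) :
    kyFanDual n k x ≤ 1 ↔ (∀ i, |x i| ≤ 1) ∧ ∑ i, |x i| ≤ (k : ℝ) := by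
  have : Nonempty (Fin n) := ⟨⟨0, hn⟩⟩
  unfold kyFanDual linf
  rw [max_le_iff, div_le_one (by positivity : (0:ℝ) < (k:ℝ))]
  constructor
  · rintro ⟨h1, h2⟩
    exact ⟨fun i => le_trans (le_csSup (Set.Finite.bddAbove (Set.finite_range _)) ⟨i, rfl⟩) h1, h2⟩
  · rintro ⟨h1, h2⟩
    exact ⟨csSup_le (Set.range_nonempty _) (by rintro r ⟨i, rfl⟩; exact h1 i), h2⟩

lemma sum_split1 {n : ℕ} (j : Fin n) (f : Fin n → ℝ) :
    ∑ i, f i = f j + ∑ i ∈ univ.erase j, f i :=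
  (Finset.add_sum_erase _ f (mem_univ j)).symm

lemma sum_split2 {n : ℕ} {j m : Fin n} (hjm : j ≠ m) (f : Fin n → ℝ) :
    ∑ i, f i = f m + f j + ∑ i ∈ (univ.erase m).erase j, f i := by
  rw [← Finset.add_sum_erase _ f (mem_univ m),
      ← Finset.add_sum_erase _ f (Finset.mem_erase.2 ⟨hjm, mem_univ j⟩), add_assoc]

lemma abs_add_sign (r ε : ℝ) (hε : 0 ≤ ε) :
    |r + ε * (if 0 ≤ r then (1:ℝ) else -1)| = |r| + ε := by
  by_cases h : 0 ≤ r
  · rw [if_pos h, mul_one, abs_of_nonneg (by linarith), abs_of_nonneg h]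
  · rw [if_neg h, abs_of_nonpos (by nlinarith), abs_of_neg (lt_of_not_ge h)]; ring

lemma abs_sub_sign (r ε : ℝ) (hε : 0 ≤ ε) (h2 : ε ≤ |r|) :
    |r - ε * (if 0 ≤ r then (1:ℝ) else -1)| = |r| - ε := by
  by_cases h : 0 ≤ r
  · rw [abs_of_nonneg h] at h2
    rw [if_pos h, mul_one, abs_of_nonneg (by linarith), abs_of_nonneg h]
  · rw [abs_of_neg (lt_of_not_ge h)] at h2
    rw [if_neg h, abs_of_nonpos (by linarith), abs_of_neg (lt_of_not_ge h)]; ring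

/-- Lemma 2.2: the extreme points of the unit ball of the dual Ky Fan `k`-norm are
exactly the `±1`-vectors supported on a set of cardinality `k`. -/
lemma endpoint_eq {a b y z : ℝ} (ha : 0 < a) (hb : 0 < b) (hab : a + b = 1)
    (hy : y ≤ 1) (hz : z ≤ 1) (h : a * y + b * z = 1) : y = 1 ∧ z = 1 := by
  have h1 : 0 ≤ a * (1 - y) := mul_nonneg ha.le (by linarith)
  have h2 : 0 ≤ b * (1 - z) := mul_nonneg hb.le (by linarith)
  have heq : a * (1 - y) + b * (1 - z) = 0 := by nlinarith
  have hy' : a * (1 - y) = 0 := by linarith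
  have hz' : b * (1 - z) = 0 := by linarith
  constructor
  · rcases mul_eq_zero.1 hy' with h|h
    · exact absurd h ha.ne'
    · linarith
  · rcases mul_eq_zero.1 hz' with h|h
    · exact absurd h hb.ne'
    · linarith

theorem stmt_1 (n k : ℕ) (hk : 1 ≤ k) (hkn : k ≤ n) :
    Set.extremePoints ℝ {x : Fin n → ℝ | kyFanDual n k x ≤ 1}
      = {v | ∃ S : Finset (Fin n), S.card = k ∧
          (∀ i ∈ S, v i = 1 ∨ v i = -1) ∧ (∀ i ∉ S, v i = 0)} := by
  classical
  have hn : 0 < n := lt_of_lt_of_le hk hkn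
  have hk0 : 0 < k := hk
  ext x
  rw [mem_extremePoints]
  simp only [Set.mem_setOf_eq, memBall n k hn hk0]
  constructor
  · rintro ⟨⟨hbound, hsum⟩, hext⟩
    -- Step 1: every coordinate is 1, -1 or 0
    have htri : ∀ j, x j = 1 ∨ x j = -1 ∨ x j = 0 := by
      intro j
      by_contra hj
      push_neg at hj
      obtain ⟨h1, h2, h3⟩ := hj
      have hj0 : 0 < |x j| := abs_pos.2 h3
      have hj1 : |x j| < 1 := lt_of_le_of_ne (hbound j) (fun h => by
        rcases (abs_eq (by norm_num : (0:ℝ) ≤ 1)).1 h with h'|h'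
        · exact h1 h'
        · exact h2 h')
      by_cases hc : ∑ i, |x i| < k
      · -- Case A : slack in the ℓ¹ constraint; perturb coordinate j alone
        set ε := min (1 - |x j|) ((k:ℝ) - ∑ i, |x i|) with hεdef
        have hε : 0 < ε := lt_min (by linarith) (by linarith)
        have hε1 : ε ≤ 1 - |x j| := min_le_left _ _
        have hε2 : ε ≤ (k:ℝ) - ∑ i, |x i| := min_le_right _ _
        have hmem : ∀ c : ℝ, |c| ≤ |x j| + ε →
            ((∀ i, |Function.update x j c i| ≤ 1) ∧
              ∑ i, |Function.update x j c i| ≤ (k : ℝ)) := by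
          intro c hc'
          have htail : ∑ i ∈ univ.erase j, |Function.update x j c i|
              = ∑ i ∈ univ.erase j, |x i| :=
            Finset.sum_congr rfl fun i hi => by
              rw [Function.update_of_ne (Finset.mem_erase.1 hi).1]
          have hx' : ∑ i, |x i| = |x j| + ∑ i ∈ univ.erase j, |x i| := sum_split1 j _
          constructor
          · intro i
            by_cases h : i = j
            · subst h; simp only [Function.update_self]; linarith
            · rw [Function.update_of_ne h]; exact hbound i
          · rw [sum_split1 j, htail, Function.update_self]
            linarith
        have hy := hmem (x j + ε) (by
          have : |x j + ε| ≤ |x j| + |ε| := abs_add_le _ _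
          rw [abs_of_nonneg hε.le] at this; linarith)
        have hz := hmem (x j - ε) (by
          have : |x j - ε| ≤ |x j| + |ε| := by
            rw [sub_eq_add_neg]
            exact (abs_add_le _ _).trans (by rw [abs_neg])
          rw [abs_of_nonneg hε.le] at this; linarith)
        have hseg : x ∈ openSegment ℝ (Function.update x j (x j + ε))
            (Function.update x j (x j - ε)) := by
          refine ⟨1/2, 1/2, by norm_num, by norm_num, by norm_num, ?_⟩
          funext i
          by_cases h : i = j
          · subst h
            simp only [Pi.add_apply, Pi.smul_apply, Function.update_self, smul_eq_mul]
            ring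
          · simp only [Pi.add_apply, Pi.smul_apply, Function.update_of_ne h, smul_eq_mul]
            ring
        have heq := (hext _ hy _ hz hseg).1
        have := congrFun heq j
        rw [Function.update_self] at this
        linarith
      · -- Case B : ℓ¹ constraint tight; perturb two coordinates
        push_neg at hc
        have hceq : ∑ i, |x i| = (k:ℝ) := le_antisymm hsum hc
        have hm : ∃ m, m ≠ j ∧ 0 < |x m| ∧ |x m| < 1 := by
          by_contra hno
          push_neg at hno
          have h01 : ∀ m ∈ univ.erase j, |x m| = 0 ∨ |x m| = 1 := by
            intro m hm'
            obtain ⟨hmj, -⟩ := Finset.mem_erase.1 hm'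
            rcases eq_or_lt_of_le (abs_nonneg (x m)) with h|h
            · exact Or.inl h.symm
            · exact Or.inr (le_antisymm (hbound m) (hno m hmj h))
          set T := (univ.erase j).filter (fun m => |x m| = 1) with hT
          have e1 : ∑ m ∈ T, |x m| = (T.card : ℝ) := by
            rw [Finset.sum_congr rfl (fun m hm' => (Finset.mem_filter.1 hm').2)]
            simp [hT]
          have e2 : ∑ m ∈ (univ.erase j).filter (fun m => ¬ |x m| = 1), |x m| = 0 :=
            Finset.sum_eq_zero fun m hm' => by
              rcases h01 m (Finset.mem_filter.1 hm').1 with h|h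
              · exact h
              · exact absurd h (Finset.mem_filter.1 hm').2
          have hts : ∑ m ∈ univ.erase j, |x m| = (T.card : ℝ) := by
            rw [← Finset.sum_filter_add_sum_filter_not (univ.erase j)
              (fun m => |x m| = 1), e2, ← hT, e1, add_zero]
          have hxj : |x j| = (k:ℝ) - T.card := by
            have hsp := sum_split1 j (fun i => |x i|)
            rw [hceq, hts] at hsp
            linarith
          rcases le_or_gt k T.card with h|h
          · have : (k:ℝ) ≤ T.card := by exact_mod_cast h
            linarith
          · have : (T.card:ℝ) + 1 ≤ k := by exact_mod_cast h
            linarith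
        obtain ⟨m, hmj, hm0, hm1⟩ := hm
        have hjm : j ≠ m := fun h => hmj h.symm
        set sj := (if 0 ≤ x j then (1:ℝ) else -1) with hsj
        set sm := (if 0 ≤ x m then (1:ℝ) else -1) with hsm
        set ε := min (min (1 - |x j|) |x j|) (min (1 - |x m|) |x m|) with hεdef
        have hεpos : 0 < ε := lt_min (lt_min (by linarith) hj0) (lt_min (by linarith) hm0)
        have he1 : ε ≤ 1 - |x j| := le_trans (min_le_left _ _) (min_le_left _ _)
        have he2 : ε ≤ |x j| := le_trans (min_le_left _ _) (min_le_right _ _)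
        have he3 : ε ≤ 1 - |x m| := le_trans (min_le_right _ _) (min_le_left _ _)
        have he4 : ε ≤ |x m| := le_trans (min_le_right _ _) (min_le_right _ _)
        have hmem : ∀ c d : ℝ, |c| ≤ 1 → |d| ≤ 1 → |c| + |d| ≤ |x j| + |x m| →
            ((∀ i, |Function.update (Function.update x j c) m d i| ≤ 1) ∧
              ∑ i, |Function.update (Function.update x j c) m d i| ≤ (k : ℝ)) := by
          intro c d hc1 hd1 hcd
          have hvj : Function.update (Function.update x j c) m d j = c := by
            rw [Function.update_of_ne hjm, Function.update_self]
          have hvm : Function.update (Function.update x j c) m d m = d :=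
            Function.update_self _ _ _
          have hvo : ∀ i, i ≠ j → i ≠ m →
              Function.update (Function.update x j c) m d i = x i := fun i hij him => by
            rw [Function.update_of_ne him, Function.update_of_ne hij]
          constructor
          · intro i
            by_cases h : i = m
            · subst h; rw [hvm]; exact hd1
            · by_cases h' : i = j
              · subst h'; rw [hvj]; exact hc1
              · rw [hvo i h' h]; exact hbound i
          · have hA := sum_split2 hjm (fun i => |Function.update (Function.update x j c) m d i|)
            have hB := sum_split2 hjm (fun i => |x i|)
            have htail : ∑ i ∈ (univ.erase m).erase j,
                |Function.update (Function.update x j c) m d i|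
                = ∑ i ∈ (univ.erase m).erase j, |x i| :=
              Finset.sum_congr rfl fun i hi => by
                obtain ⟨hij, hi'⟩ := Finset.mem_erase.1 hi
                rw [hvo i hij (Finset.mem_erase.1 hi').1]
            rw [hA, htail, hvj, hvm]
            linarith [hB, hceq]
        have habsj1 : |x j + ε * sj| = |x j| + ε := abs_add_sign _ _ hεpos.le
        have habsj2 : |x j - ε * sj| = |x j| - ε := abs_sub_sign _ _ hεpos.le he2
        have habsm1 : |x m + ε * sm| = |x m| + ε := abs_add_sign _ _ hεpos.le
        have habsm2 : |x m - ε * sm| = |x m| - ε := abs_sub_sign _ _ hεpos.le he4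
        have hy := hmem (x j + ε * sj) (x m - ε * sm)
          (by rw [habsj1]; linarith) (by rw [habsm2]; linarith)
          (by rw [habsj1, habsm2]; linarith)
        have hz := hmem (x j - ε * sj) (x m + ε * sm)
          (by rw [habsj2]; linarith) (by rw [habsm1]; linarith)
          (by rw [habsj2, habsm1]; linarith)
        have hseg : x ∈ openSegment ℝ
            (Function.update (Function.update x j (x j + ε * sj)) m (x m - ε * sm))
            (Function.update (Function.update x j (x j - ε * sj)) m (x m + ε * sm)) := by
          refine ⟨1/2, 1/2, by norm_num, by norm_num, by norm_num, ?_⟩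
          funext i
          simp only [Pi.add_apply, Pi.smul_apply, smul_eq_mul]
          by_cases h : i = m
          · subst h; rw [Function.update_self, Function.update_self]; ring
          · by_cases h' : i = j
            · subst h'
              rw [Function.update_of_ne hjm, Function.update_of_ne hjm,
                Function.update_self, Function.update_self]
              ring
            · rw [Function.update_of_ne h, Function.update_of_ne h,
                Function.update_of_ne h', Function.update_of_ne h']
              ring
        have heq := (hext _ hy _ hz hseg).1
        have hcf := congrFun heq j
        rw [Function.update_of_ne hjm, Function.update_self] at hcf
        have hsj0 : sj ≠ 0 := by rw [hsj]; split <;> norm_num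
        have : ε * sj = 0 := by linarith
        rcases mul_eq_zero.1 this with h|h
        · exact absurd h hεpos.ne'
        · exact hsj0 h
    -- Step 2: the support has exactly k elements
    set S := univ.filter (fun i => x i ≠ 0) with hSdef
    have hmemS : ∀ i, i ∈ S ↔ x i ≠ 0 := fun i => by simp [hSdef]
    have e1 : ∑ i ∈ S, |x i| = (S.card : ℝ) := by
      have hone : ∀ i ∈ S, |x i| = 1 := by
        intro i hi
        rcases htri i with h|h|h
        · rw [h]; norm_num
        · rw [h]; norm_num
        · exact absurd h ((hmemS i).1 hi)
      rw [Finset.sum_congr rfl hone]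
      simp
    have e2 : ∑ i ∈ univ.filter (fun i => ¬ x i ≠ 0), |x i| = 0 :=
      Finset.sum_eq_zero fun i hi => by
        have := (Finset.mem_filter.1 hi).2
        push_neg at this
        rw [this, abs_zero]
    have hSsum : ∑ i, |x i| = (S.card : ℝ) := by
      rw [← Finset.sum_filter_add_sum_filter_not univ (fun i => x i ≠ 0), e2, ← hSdef,
        e1, add_zero]
    have hcard_le : S.card ≤ k := by
      have : (S.card : ℝ) ≤ (k : ℝ) := hSsum ▸ hsum
      exact_mod_cast this
    have hcard : S.card = k := by
      by_contra hne
      have hlt : S.card < k := lt_of_le_of_ne hcard_le hne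
      have hSne : S ≠ univ := fun h => by
        rw [h, Finset.card_univ, Fintype.card_fin] at hlt
        omega
      obtain ⟨i₀, hi₀⟩ : ∃ i, i ∉ S := by
        by_contra hall
        push_neg at hall
        exact hSne (Finset.eq_univ_iff_forall.2 hall)
      have hxi₀ : x i₀ = 0 := by
        by_contra h
        exact hi₀ ((hmemS i₀).2 h)
      have hmem : ∀ c : ℝ, |c| ≤ 1 →
          ((∀ i, |Function.update x i₀ c i| ≤ 1) ∧
            ∑ i, |Function.update x i₀ c i| ≤ (k : ℝ)) := by
        intro c hc1
        have htail : ∑ i ∈ univ.erase i₀, |Function.update x i₀ c i|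
            = ∑ i ∈ univ.erase i₀, |x i| :=
          Finset.sum_congr rfl fun i hi => by
            rw [Function.update_of_ne (Finset.mem_erase.1 hi).1]
        have hx' : ∑ i, |x i| = |x i₀| + ∑ i ∈ univ.erase i₀, |x i| := sum_split1 i₀ _
        constructor
        · intro i
          by_cases h : i = i₀
          · subst h; rw [Function.update_self]; exact hc1
          · rw [Function.update_of_ne h]; exact hbound i
        · rw [sum_split1 i₀, htail, Function.update_self]
          have hk' : (S.card : ℝ) + 1 ≤ (k : ℝ) := by exact_mod_cast hlt
          rw [hSsum] at hx'
          rw [hxi₀, abs_zero] at hx'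
          linarith
      have hy := hmem 1 (by norm_num)
      have hz := hmem (-1) (by norm_num)
      have hseg : x ∈ openSegment ℝ (Function.update x i₀ 1)
          (Function.update x i₀ (-1)) := by
        refine ⟨1/2, 1/2, by norm_num, by norm_num, by norm_num, ?_⟩
        funext i
        simp only [Pi.add_apply, Pi.smul_apply, smul_eq_mul]
        by_cases h : i = i₀
        · subst h; rw [Function.update_self, Function.update_self, hxi₀]; ring
        · rw [Function.update_of_ne h, Function.update_of_ne h]; ring
      have heq := (hext _ hy _ hz hseg).1
      have := congrFun heq i₀
      rw [Function.update_self, hxi₀] at this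
      norm_num at this
    refine ⟨S, hcard, fun i hi => ?_, fun i hi => ?_⟩
    · rcases htri i with h|h|h
      · exact Or.inl h
      · exact Or.inr h
      · exact absurd h ((hmemS i).1 hi)
    · by_contra h
      exact hi ((hmemS i).2 h)
  · rintro ⟨S, hScard, hSpm, hS0⟩
    have habs1 : ∀ i ∈ S, |x i| = 1 := fun i hi => by
      rcases hSpm i hi with h|h <;> rw [h] <;> norm_num
    have hxb : ∀ i, |x i| ≤ 1 := by
      intro i
      by_cases hi : i ∈ S
      · rw [habs1 i hi]
      · rw [hS0 i hi, abs_zero]; norm_num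
    have hsumS : ∀ w : Fin n → ℝ, (∀ i ∈ S, |w i| = 1) → ∑ i ∈ S, |w i| = (k:ℝ) := by
      intro w hw
      rw [Finset.sum_congr rfl hw]
      simp [hScard]
    have hxsum : ∑ i, |x i| = (k:ℝ) := by
      rw [← Finset.sum_subset (Finset.subset_univ S)
        (fun i _ hi => by rw [hS0 i hi, abs_zero])]
      exact hsumS x habs1
    refine ⟨⟨hxb, le_of_eq hxsum⟩, ?_⟩
    rintro y ⟨hyb, hys⟩ z ⟨hzb, hzs⟩ ⟨a, b, ha, hb, hab, hseg⟩
    have hseg' : ∀ i, a * y i + b * z i = x i := fun i => by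
      have := congrFun hseg i
      simpa using this
    have key : ∀ i ∈ S, y i = x i ∧ z i = x i := by
      intro i hi
      have hy1 := abs_le.1 (hyb i)
      have hz1 := abs_le.1 (hzb i)
      rcases hSpm i hi with h|h
      · have := endpoint_eq ha hb hab hy1.2 hz1.2 (by rw [← h]; exact hseg' i)
        rw [h]; exact this
      · have := endpoint_eq ha hb hab (by linarith [hy1.1] : -y i ≤ 1)
          (by linarith [hz1.1] : -z i ≤ 1)
          (by have := hseg' i; rw [h] at this; nlinarith)
        constructor
        · rw [h]; linarith [this.1]
        · rw [h]; linarith [this.2]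
    have hoff : ∀ w : Fin n → ℝ, (∀ i, |w i| ≤ 1) → ∑ i, |w i| ≤ (k:ℝ) →
        (∀ i ∈ S, w i = x i) → w = x := by
      intro w hwb hws hwS
      have hsw : ∑ i ∈ S, |w i| = (k:ℝ) :=
        hsumS w fun i hi => by rw [hwS i hi]; exact habs1 i hi
      have hcompl : ∑ i ∈ Sᶜ, |w i| ≤ 0 := by
        have := Finset.sum_add_sum_compl S (fun i => |w i|)
        linarith
      have hzero : ∀ i ∈ Sᶜ, |w i| = 0 := by
        rw [← Finset.sum_eq_zero_iff_of_nonneg (fun i _ => abs_nonneg _)]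
        exact le_antisymm hcompl (Finset.sum_nonneg fun i _ => abs_nonneg _)
      funext i
      by_cases hi : i ∈ S
      · exact hwS i hi
      · rw [hS0 i hi]
        exact abs_eq_zero.1 (hzero i (Finset.mem_compl.2 hi))
    exact ⟨hoff y hyb hys (fun i hi => (key i hi).1),
      hoff z hzb hzs (fun i hi => (key i hi).2)⟩
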